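/- Let G be a graph on n vertices that contains no independent set of size p (p ≥ 2). Then the number of edges of G is more than n²/(2p) - n/2. Equivalently (complement form of Turán's theorem): if a graph on n vertices has no clique of size p, it has at most (1 - 1/(p-1))·n²/2 edges. -/

import Mathlib

open Finset SimpleGraph

/-- Fiber sizes of `· % r` on `Fin n`. -/
private def fib (n r i : ℕ) : ℕ := #(Finset.univ.filter fun v : Fin n => (v : ℕ) % r = i)

private lemma fib_sum (n r : ℕ) (hr : 0 < r) : ∑ i ∈ Finset.range r, fib n r i = n := by
  have h := Finset.card_eq_sum_card_fiberwise (f := fun v : Fin n => (v : ℕ) % r)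
    (s := Finset.univ) (t := Finset.range r)
    (fun x _ => Finset.mem_range.2 (Nat.mod_lt _ hr))
  simpa [fib, Finset.card_univ] using h.symm

private lemma turan_deg_sum (n r : ℕ) (hr : 0 < r) :
    2 * #(turanGraph n r).edgeFinset + ∑ i ∈ Finset.range r, fib n r i ^ 2 = n * n := by
  have hdeg : ∀ v : Fin n, (turanGraph n r).degree v + fib n r ((v : ℕ) % r) = n := by
    intro v
    have : (turanGraph n r).degree v =
        #(Finset.univ.filter fun w : Fin n => ¬ ((w : ℕ) % r = (v : ℕ) % r)) := by
      rw [← card_neighborFinset_eq_degree]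
      congr 1
      ext w
      rw [mem_neighborFinset]
      simp [turanGraph, ne_comm, eq_comm]
    rw [this, fib, add_comm, Finset.card_filter_add_card_filter_not]
    simp
  have hsum : ∑ v : Fin n, ((turanGraph n r).degree v + fib n r ((v : ℕ) % r)) = n * n := by
    simp [hdeg, Finset.card_univ]
  rw [Finset.sum_add_distrib, SimpleGraph.sum_degrees_eq_twice_card_edges] at hsum
  rw [← hsum]
  congr 1
  rw [← Finset.sum_fiberwise_of_maps_to (g := fun v : Fin n => (v : ℕ) % r)
      (t := Finset.range r) (fun x _ => Finset.mem_range.2 (Nat.mod_lt _ hr))]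
  refine Finset.sum_congr rfl fun i _ => ?_
  rw [sq]
  have : ∀ v ∈ Finset.univ.filter (fun v : Fin n => (v : ℕ) % r = i),
      fib n r ((v : ℕ) % r) = fib n r i := by
    intro v hv
    rw [(Finset.mem_filter.1 hv).2]
  rw [Finset.sum_congr rfl this, Finset.sum_const, fib, smul_eq_mul]

/-- Turán's theorem in complement form: if a graph `G` on `n` vertices contains no
independent set of size `p` (with `p ≥ 2`), then `G` has more than
`n²/(2p) - n/2` edges. -/
theorem stmt_0 {V : Type*} [Fintype V] [DecidableEq V] [Nonempty V]
    (G : SimpleGraph V) [DecidableRel G.Adj] (p : ℕ) (hp : 2 ≤ p)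
    (hindep : Gᶜ.CliqueFree p) :
    ((Fintype.card V : ℝ) ^ 2 / (2 * p) - (Fintype.card V : ℝ) / 2)
      < (G.edgeFinset.card : ℝ) := by
  classical
  obtain ⟨r, rfl⟩ : ∃ r, p = r + 1 := ⟨p - 1, by omega⟩
  have hr : 0 < r := by omega
  set n := Fintype.card V with hn
  -- transfer the Turán graph to `V`
  let e : V ≃ Fin n := Fintype.equivFin V
  let iso := SimpleGraph.Iso.comap e (turanGraph n r)
  haveI : DecidableRel ((turanGraph n r).comap (e.toEmbedding : V → Fin n)).Adj :=
    fun a b => (inferInstance : DecidableRel (turanGraph n r).Adj) _ _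
  have hmax : ((turanGraph n r).comap (e.toEmbedding : V → Fin n)).IsTuranMaximal r :=
    (isTuranMaximal_turanGraph hr).iso iso.symm hr
  have hle : #Gᶜ.edgeFinset ≤ #(turanGraph n r).edgeFinset :=
    (hmax.2 (G' := Gᶜ) hindep).trans_eq iso.card_edgeFinset_eq
  -- complement edge count
  have hcompl : #G.edgeFinset + #Gᶜ.edgeFinset = n.choose 2 := by
    have hd : Disjoint G.edgeFinset Gᶜ.edgeFinset :=
      SimpleGraph.disjoint_edgeFinset.2 disjoint_compl_right
    have hu : G.edgeFinset ∪ Gᶜ.edgeFinset = (⊤ : SimpleGraph V).edgeFinset := by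
      ext s
      induction s using Sym2.ind with
      | _ a b =>
        simp only [Finset.mem_union, SimpleGraph.mem_edgeFinset, SimpleGraph.mem_edgeSet,
          SimpleGraph.compl_adj, SimpleGraph.top_adj]
        have : G.Adj a b → a ≠ b := fun h => G.ne_of_adj h
        tauto
    rw [← SimpleGraph.card_edgeFinset_top_eq_card_choose_two, ← hu,
      Finset.card_union_of_disjoint hd]
  -- Cauchy–Schwarz on fiber sizes
  set S : ℕ := ∑ i ∈ Finset.range r, fib n r i ^ 2 with hS
  have hCS : n * n ≤ r * S := by
    have := sq_sum_le_card_mul_sum_sq (s := Finset.range r) (f := fun i => (fib n r i : ℕ))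
    rwa [fib_sum n r hr, Finset.card_range, sq] at this
  have hds := turan_deg_sum n r hr
  have hnpos : 0 < n := Fintype.card_pos
  -- pass to the reals
  have hleR : (#Gᶜ.edgeFinset : ℝ) ≤ #(turanGraph n r).edgeFinset := by exact_mod_cast hle
  have hcomplR : (#G.edgeFinset : ℝ) + #Gᶜ.edgeFinset = (n : ℝ) * (n - 1) / 2 := by
    rw [← Nat.cast_choose_two]
    exact_mod_cast hcompl
  have hdsR : 2 * (#(turanGraph n r).edgeFinset : ℝ) + (S : ℝ) = (n : ℝ) * n := by
    exact_mod_cast hds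
  have hCSR : (n : ℝ) * n ≤ (r : ℝ) * S := by exact_mod_cast hCS
  have hnR : (1 : ℝ) ≤ n := by exact_mod_cast hnpos
  have hrR : (1 : ℝ) ≤ r := by exact_mod_cast hr
  have hSpos : (0 : ℝ) < S := by nlinarith
  have key : (n : ℝ) ^ 2 / (2 * (r + 1)) < (S : ℝ) / 2 := by
    rw [div_lt_div_iff₀ (by positivity) (by norm_num)]
    nlinarith
  push_cast
  nlinarith [key, hcomplR, hdsR, hleR]
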